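/- There exists a universal constant C > 0 such that for every ε > 0 and every displacement u : Ω⁰_ε → ℝ, the total variation of the discrete dislocation measure is controlled by the discrete elastic energy: |μ_u|(Ω) ≤ C · SD_ε(u), where SD_ε(u) = ½ Σ_{(i,j) ∈ Ω¹_ε} dist²(u(i) − u(j), ℤ) and μ_u = Σ_{i ∈ Ω²_ε} α_u(i) δ_{i + (ε/2, ε/2)}. -/

import Mathlib

open MeasureTheory Filter

noncomputable section

/-- The position in `ℝ²` of the lattice point `i ∈ ℤ²` of the lattice `εℤ²`. -/
def pt (ε : ℝ) (i : ℤ × ℤ) : ℝ × ℝ := (ε * i.1, ε * i.2)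

/-- `i` is a point of the lattice `Ω⁰_ε = εℤ² ∩ Ω`. -/
def latticePt (ε : ℝ) (Ω : Set (ℝ × ℝ)) (i : ℤ × ℤ) : Prop := pt ε i ∈ Ω

/-- `(i, j)` is a nearest-neighbor bond in `Ω¹_ε`: both endpoints lie in `Ω` and
`j = i + e₁` or `j = i + e₂` (so that `|i − j| = ε` and `i ≤ j` componentwise). -/
def bond (ε : ℝ) (Ω : Set (ℝ × ℝ)) (i j : ℤ × ℤ) : Prop :=
  latticePt ε Ω i ∧ latticePt ε Ω j ∧ (j = i + (1, 0) ∨ j = i + (0, 1))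

/-- `i ∈ Ω²_ε`: the closed cell `i + [0, ε]²` is contained in `Ω`. -/
def cellIn (ε : ℝ) (Ω : Set (ℝ × ℝ)) (i : ℤ × ℤ) : Prop :=
  Set.Icc (pt ε i) (pt ε i + (ε, ε)) ⊆ Ω

/-- The center of the cell `i + [0, ε]²`. -/
def cellCenter (ε : ℝ) (i : ℤ × ℤ) : ℝ × ℝ := pt ε i + (ε / 2, ε / 2)

/-- The projection `P : ℝ → ℤ` onto the nearest integer (with the tie-breaking convention
making `t − P t ∈ (−1/2, 1/2]`). -/
def Pint (t : ℝ) : ℤ := ⌈t - 1 / 2⌉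

/-- The elastic part of the discrete strain of `u` on the (oriented) bond from `i` to `j`:
`β^e_u = 𝐝u − P(𝐝u) ∈ (−1/2, 1/2]`, where `𝐝u_{i,j} = u(j) − u(i)`. -/
def betaE (u : ℤ × ℤ → ℝ) (i j : ℤ × ℤ) : ℝ :=
  (u j - u i) - (Pint (u j - u i) : ℝ)

/-- The plastic part of the discrete strain: `β^p_u = P(𝐝u) ∈ ℤ`. -/
def betaP (u : ℤ × ℤ → ℝ) (i j : ℤ × ℤ) : ℝ := (Pint (u j - u i) : ℝ)

/-- The discrete curl of a bond function `ξ` around the cell with lower-left corner `i`: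
`𝐝ξ(i) = ξ_{i,i+e₂} + ξ_{i+e₂,i+e₁+e₂} − ξ_{i+e₁,i+e₁+e₂} − ξ_{i,i+e₁}`. -/
def dcurl (ξ : ℤ × ℤ → ℤ × ℤ → ℝ) (i : ℤ × ℤ) : ℝ :=
  ξ i (i + (0, 1)) + ξ (i + (0, 1)) (i + (1, 1)) - ξ (i + (1, 0)) (i + (1, 1)) -
    ξ i (i + (1, 0))

/-- The discrete dislocation function `α_u(i) = 𝐝β^e_u(i)`. -/
def alphaSD (u : ℤ × ℤ → ℝ) (i : ℤ × ℤ) : ℝ := dcurl (betaE u) i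

/-- The discrete screw-dislocation energy
`SD_ε(u) = ½ Σ_{(i,j) ∈ Ω¹_ε} dist²(u(i) − u(j), ℤ)`. -/
def SDen (ε : ℝ) (Ω : Set (ℝ × ℝ)) (u : ℤ × ℤ → ℝ) : ℝ :=
  (1 / 2) * ∑' b : {b : (ℤ × ℤ) × (ℤ × ℤ) // bond ε Ω b.1 b.2},
    (betaE u b.1.1 b.1.2) ^ 2

/-- The total variation `|μ_u|(Ω)` of the discrete dislocation measure
`μ_u = Σ_{i ∈ Ω²_ε} α_u(i) δ_{i+(ε/2,ε/2)}`. -/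
def SDtv (ε : ℝ) (Ω : Set (ℝ × ℝ)) (u : ℤ × ℤ → ℝ) : ℝ :=
  ∑' i : {i : ℤ × ℤ // cellIn ε Ω i}, |alphaSD u i|

/-- The phase `u(v) = θ(v)/2π ∈ [0, 1)` of a spin field `v` with values in `S¹ ⊆ ℂ`
(defined by `v = e^{2πi u(v)}`; any determination of the phase gives the same discrete
vorticity). -/
def phaseu (v : ℤ × ℤ → ℂ) (l : ℤ × ℤ) : ℝ :=
  if 0 ≤ (v l).arg then (v l).arg / (2 * Real.pi) else (v l).arg / (2 * Real.pi) + 1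

/-- The discrete vorticity `γ_v = α_{θ(v)/2π}` of a spin field `v`. -/
def gammaXY (v : ℤ × ℤ → ℂ) (i : ℤ × ℤ) : ℝ := alphaSD (phaseu v) i

/-- The `XY` energy `XY_ε(v) = ½ Σ_{(i,j) ∈ Ω¹_ε} |v(i) − v(j)|²`. -/
def XYen (ε : ℝ) (Ω : Set (ℝ × ℝ)) (v : ℤ × ℤ → ℂ) : ℝ :=
  (1 / 2) * ∑' b : {b : (ℤ × ℤ) × (ℤ × ℤ) // bond ε Ω b.1 b.2},
    ‖v b.1.1 - v b.1.2‖ ^ 2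

/-- The total variation `|μ_v|(Ω)` of the discrete vorticity measure. -/
def XYtv (ε : ℝ) (Ω : Set (ℝ × ℝ)) (v : ℤ × ℤ → ℂ) : ℝ :=
  ∑' i : {i : ℤ × ℤ // cellIn ε Ω i}, |gammaXY v i|


/-! ### Auxiliary lemmas -/

lemma abs_betaE_le (u : ℤ × ℤ → ℝ) (i j : ℤ × ℤ) : |betaE u i j| ≤ 1/2 := by
  unfold betaE Pint
  set t := u j - u i
  have h1 := Int.le_ceil (t - 1/2)
  have h2 := Int.ceil_lt_add_one (t - 1/2)
  rw [abs_le]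
  constructor <;> [linarith; linarith]

lemma alpha_int (u : ℤ × ℤ → ℝ) (i : ℤ × ℤ) : ∃ n : ℤ, alphaSD u i = n := by
  refine ⟨Pint (u (i+(1,0)) - u i) + Pint (u (i+(1,1)) - u (i+(1,0)))
    - Pint (u (i+(0,1)) - u i) - Pint (u (i+(1,1)) - u (i+(0,1))), ?_⟩
  unfold alphaSD dcurl betaE
  push_cast
  ring

lemma cell_bound (u : ℤ×ℤ → ℝ) (i : ℤ×ℤ) :
    |alphaSD u i| ≤ 32 * ((betaE u i (i+(0,1)))^2 + (betaE u (i+(0,1)) (i+(1,1)))^2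
      + (betaE u (i+(1,0)) (i+(1,1)))^2 + (betaE u i (i+(1,0)))^2) := by
  obtain ⟨n, hn⟩ := alpha_int u i
  set b1 := betaE u i (i+(0,1))
  set b2 := betaE u (i+(0,1)) (i+(1,1))
  set b3 := betaE u (i+(1,0)) (i+(1,1))
  set b4 := betaE u i (i+(1,0))
  have hα : alphaSD u i = b1 + b2 - b3 - b4 := rfl
  have h1 := abs_betaE_le u i (i+(0,1))
  have h2 := abs_betaE_le u (i+(0,1)) (i+(1,1))
  have h3 := abs_betaE_le u (i+(1,0)) (i+(1,1))
  have h4 := abs_betaE_le u i (i+(1,0))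
  rw [abs_le] at h1 h2 h3 h4
  by_cases hsmall : |alphaSD u i| < 1
  · have : n = 0 := by
      have : |(n:ℝ)| < 1 := hn ▸ hsmall
      exact_mod_cast Int.abs_lt_one_iff.mp (by exact_mod_cast this)
    rw [hn, this]
    simp only [Int.cast_zero, abs_zero]
    positivity
  · push_neg at hsmall
    rcases abs_cases (alphaSD u i) with ⟨he, _⟩ | ⟨he, _⟩ <;>
    · rw [he] at hsmall ⊢
      rw [hα] at hsmall ⊢
      nlinarith [sq_nonneg (b1-b2), sq_nonneg (b1+b3), sq_nonneg (b1+b4),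
        sq_nonneg (b2+b3), sq_nonneg (b2+b4), sq_nonneg (b3-b4),
        sq_nonneg (b1+b2-b3-b4-1), sq_nonneg (b1+b2-b3-b4+1)]

lemma lattice_finite {Ω : Set (ℝ × ℝ)} (hΩ : Bornology.IsBounded Ω) {ε : ℝ} (hε : 0 < ε) :
    {i : ℤ × ℤ | latticePt ε Ω i}.Finite := by
  obtain ⟨r, hr⟩ := hΩ.subset_closedBall 0
  set N : ℤ := ⌈r / ε⌉
  apply Set.Finite.subset (Set.finite_Icc ((-N, -N) : ℤ × ℤ) (N, N))
  intro i hi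
  have hmem : pt ε i ∈ Metric.closedBall (0 : ℝ × ℝ) r := hr hi
  rw [Metric.mem_closedBall, Prod.dist_eq, max_le_iff] at hmem
  have key : ∀ k : ℤ, dist (ε * (k:ℝ)) 0 ≤ r → -N ≤ k ∧ k ≤ N := by
    intro k hk
    rw [Real.dist_eq, sub_zero, abs_mul, abs_of_pos hε] at hk
    have hkr : |(k:ℝ)| ≤ r / ε := by
      rw [le_div_iff₀ hε] at *; linarith [hk]
    have hceil : (r / ε) ≤ (N : ℝ) := Int.le_ceil _
    have : |(k:ℝ)| ≤ (N:ℝ) := hkr.trans hceil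
    rw [abs_le] at this
    exact ⟨by exact_mod_cast this.1, by exact_mod_cast this.2⟩
  have k1 := key i.1 hmem.1
  have k2 := key i.2 hmem.2
  exact ⟨⟨k1.1, k2.1⟩, ⟨k1.2, k2.2⟩⟩

lemma corner_mem {Ω : Set (ℝ × ℝ)} {ε : ℝ} (hε : 0 < ε) {i : ℤ × ℤ}
    (hi : cellIn ε Ω i) (d : ℤ × ℤ) (hd : d = (0,0) ∨ d = (1,0) ∨ d = (0,1) ∨ d = (1,1)) :
    latticePt ε Ω (i + d) := by
  apply hi
  constructor <;> constructor <;>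
  · simp only [pt, Prod.fst_add, Prod.snd_add, Prod.mk_add_mk]
    rcases hd with h | h | h | h <;> subst h <;> push_cast <;> nlinarith [hε.le]

lemma tsum_subtype_finite {α : Type*} {s : Set α} (hs : s.Finite) (f : α → ℝ) :
    ∑' x : s, f x = ∑ x ∈ hs.toFinset, f x := by
  rw [tsum_subtype, tsum_eq_sum (s := hs.toFinset)
    (fun b hb => Set.indicator_of_notMem (fun h => hb (hs.mem_toFinset.mpr h)) f)]
  exact Finset.sum_congr rfl fun x hx => Set.indicator_of_mem (hs.mem_toFinset.mp hx) f
/-- There is a universal constant `C > 0` such that for every `ε > 0` and every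
displacement `u : Ω⁰_ε → ℝ`, the total variation of the discrete dislocation measure is
controlled by the screw-dislocation energy: `|μ_u|(Ω) ≤ C · SD_ε(u)`. -/
theorem SD_total_variation_bound :
    ∃ C : ℝ, 0 < C ∧
      ∀ (Ω : Set (ℝ × ℝ)), IsOpen Ω → Bornology.IsBounded Ω →
        ∀ ε : ℝ, 0 < ε → ∀ u : ℤ × ℤ → ℝ,
          SDtv ε Ω u ≤ C * SDen ε Ω u := by
  refine ⟨256, by norm_num, fun Ω hO hB ε hε u => ?_⟩
  have hlat := lattice_finite hB hε
  have hcell : {i : ℤ × ℤ | cellIn ε Ω i}.Finite := by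
    apply hlat.subset
    intro i hi
    simpa using corner_mem hε hi 0 (Or.inl rfl)
  have hbond : {b : (ℤ × ℤ) × (ℤ × ℤ) | bond ε Ω b.1 b.2}.Finite := by
    apply (hlat.prod hlat).subset
    intro b hb
    exact ⟨hb.1, hb.2.1⟩
  set S := hcell.toFinset with hS
  set B := hbond.toFinset with hBdef
  have htv : SDtv ε Ω u = ∑ i ∈ S, |alphaSD u i| :=
    tsum_subtype_finite hcell (fun i => |alphaSD u i|)
  have hen : SDen ε Ω u = (1/2) * ∑ b ∈ B, betaE u b.1 b.2 ^ 2 := by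
    unfold SDen
    exact congrArg (fun x => 1 / 2 * x) (tsum_subtype_finite hbond (fun b => betaE u b.1 b.2 ^ 2))
  -- the four edge maps
  have hedge : ∀ g : ℤ × ℤ → (ℤ × ℤ) × (ℤ × ℤ),
      (∀ x ∈ S, ∀ y ∈ S, g x = g y → x = y) → (∀ i ∈ S, g i ∈ B) →
      ∑ i ∈ S, betaE u (g i).1 (g i).2 ^ 2 ≤ ∑ b ∈ B, betaE u b.1 b.2 ^ 2 := by
    intro g hinj hmem
    rw [← Finset.sum_image (g := g) (f := fun b : (ℤ×ℤ)×(ℤ×ℤ) => betaE u b.1 b.2 ^ 2) (s := S) hinj]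
    apply Finset.sum_le_sum_of_subset_of_nonneg
    · intro b hb
      obtain ⟨i, hi, rfl⟩ := Finset.mem_image.mp hb
      exact hmem i hi
    · intros; positivity
  have hScell : ∀ i ∈ S, cellIn ε Ω i := fun i hi => hcell.mem_toFinset.mp hi
  have hBbond : ∀ b : (ℤ×ℤ)×(ℤ×ℤ), bond ε Ω b.1 b.2 → b ∈ B :=
    fun b hb => hbond.mem_toFinset.mpr hb
  have e2 : ∀ i : ℤ × ℤ, i + (1,1) = (i + (0,1)) + (1,0) := by
    intro i; simp [Prod.ext_iff]
  have e3 : ∀ i : ℤ × ℤ, i + (1,1) = (i + (1,0)) + (0,1) := by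
    intro i; simp [Prod.ext_iff]
  have hc0 : ∀ i ∈ S, latticePt ε Ω i := fun i hi => by
    simpa using corner_mem hε (hScell i hi) 0 (Or.inl rfl)
  have hc10 : ∀ i ∈ S, latticePt ε Ω (i + (1,0)) :=
    fun i hi => corner_mem hε (hScell i hi) (1,0) (by tauto)
  have hc01 : ∀ i ∈ S, latticePt ε Ω (i + (0,1)) :=
    fun i hi => corner_mem hε (hScell i hi) (0,1) (by tauto)
  have hc11 : ∀ i ∈ S, latticePt ε Ω (i + (1,1)) :=
    fun i hi => corner_mem hε (hScell i hi) (1,1) (by tauto)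
  have E1 : ∑ i ∈ S, betaE u i (i + (0,1)) ^ 2 ≤ ∑ b ∈ B, betaE u b.1 b.2 ^ 2 := by
    apply hedge (fun i => (i, i + (0,1)))
    · intro x _ y _ h; exact (Prod.ext_iff.mp h).1
    · intro i hi; exact hBbond _ ⟨hc0 i hi, hc01 i hi, Or.inr rfl⟩
  have E2 : ∑ i ∈ S, betaE u (i + (0,1)) (i + (1,1)) ^ 2 ≤ ∑ b ∈ B, betaE u b.1 b.2 ^ 2 := by
    apply hedge (fun i => (i + (0,1), i + (1,1)))
    · intro x _ y _ h
      have := (Prod.ext_iff.mp h).1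
      exact add_right_cancel this
    · intro i hi; exact hBbond _ ⟨hc01 i hi, hc11 i hi, Or.inl (e2 i)⟩
  have E3 : ∑ i ∈ S, betaE u (i + (1,0)) (i + (1,1)) ^ 2 ≤ ∑ b ∈ B, betaE u b.1 b.2 ^ 2 := by
    apply hedge (fun i => (i + (1,0), i + (1,1)))
    · intro x _ y _ h
      have := (Prod.ext_iff.mp h).1
      exact add_right_cancel this
    · intro i hi; exact hBbond _ ⟨hc10 i hi, hc11 i hi, Or.inr (e3 i)⟩
  have E4 : ∑ i ∈ S, betaE u i (i + (1,0)) ^ 2 ≤ ∑ b ∈ B, betaE u b.1 b.2 ^ 2 := by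
    apply hedge (fun i => (i, i + (1,0)))
    · intro x _ y _ h; exact (Prod.ext_iff.mp h).1
    · intro i hi; exact hBbond _ ⟨hc0 i hi, hc10 i hi, Or.inl rfl⟩
  have step1 : ∑ i ∈ S, |alphaSD u i| ≤
      32 * (∑ i ∈ S, betaE u i (i + (0,1)) ^ 2 + ∑ i ∈ S, betaE u (i + (0,1)) (i + (1,1)) ^ 2
        + ∑ i ∈ S, betaE u (i + (1,0)) (i + (1,1)) ^ 2 + ∑ i ∈ S, betaE u i (i + (1,0)) ^ 2) := by
    rw [← Finset.sum_add_distrib, ← Finset.sum_add_distrib, ← Finset.sum_add_distrib,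
      Finset.mul_sum]
    exact Finset.sum_le_sum fun i _ => cell_bound u i
  rw [htv, hen]
  linarith [step1, E1, E2, E3, E4]
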